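/- Let X₁,…,Xₙ be independent Poisson random variables with parameters λ₁,…,λₙ, and Y_i = Σⱼ a_{ij} Xⱼ with a_{ij} nonnegative integers. Then the r-th conditional factorial moment E[Xⱼ!/(Xⱼ-r)! | Y = b] equals λⱼʳ · F₀(b₁ - r a_{1j}, …, b_m - r a_{mj}) / F₀(b₁,…,b_m) when F₀(b) > 0 and all b_i - r a_{ij} ≥ 0, and zero if some b_i - r a_{ij} < 0. -/

import Mathlib

open MeasureTheory ProbabilityTheory Real
open scoped BigOperators

/-- `F₀(b) = Σ_{k ∈ ℕⁿ, A·k = b} ∏ⱼ λⱼ^{kⱼ}/kⱼ!` (empty sum gives 0). -/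
noncomputable def F0 {m n : ℕ} (A : Fin m → Fin n → ℕ) (lam : Fin n → ℝ)
    (b : Fin m → ℕ) : ℝ :=
  ∑' k : Fin n → ℕ,
    if ∀ i, ∑ j, A i j * k j = b i then ∏ j, lam j ^ k j / (Nat.factorial (k j)) else 0

/-- Auxiliary: sums interact with `Function.update`. -/
lemma sum_update_mul_aux {n : ℕ} (a k : Fin n → ℕ) (j : Fin n) (c : ℕ) :
    ∑ l, a l * Function.update k j c l + a j * k j = (∑ l, a l * k l) + a j * c := by
  have h1 : (fun l => a l * Function.update k j c l)
      = Function.update (fun l => a l * k l) j (a j * c) := by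
    funext l
    rcases eq_or_ne l j with rfl | h
    · simp
    · simp [Function.update_of_ne h]
  rw [h1, Finset.sum_update_of_mem (Finset.mem_univ j),
    ← Finset.add_sum_erase _ _ (Finset.mem_univ j)]
  have : Finset.univ \ {j} = Finset.univ.erase j := by
    ext; simp [Finset.mem_erase, and_comm]
  rw [this]; ring

/-- Auxiliary: products interact with `Function.update`. -/
lemma prod_update_div_aux {n : ℕ} (lam : Fin n → ℝ) (k : Fin n → ℕ) (j : Fin n) (c : ℕ) :
    ∏ l, lam l ^ (Function.update k j c l) / (Nat.factorial (Function.update k j c l) : ℝ)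
      = (lam j ^ c / (Nat.factorial c : ℝ))
        * ∏ l ∈ Finset.univ.erase j, lam l ^ k l / (Nat.factorial (k l) : ℝ) := by
  have h1 : (fun l => lam l ^ (Function.update k j c l)
        / (Nat.factorial (Function.update k j c l) : ℝ))
      = Function.update (fun l => lam l ^ k l / (Nat.factorial (k l) : ℝ)) j
          (lam j ^ c / (Nat.factorial c : ℝ)) := by
    funext l
    rcases eq_or_ne l j with rfl | h
    · simp
    · simp [Function.update_of_ne h]
  rw [h1, Finset.prod_update_of_mem (Finset.mem_univ j)]
  congr 1
  apply Finset.prod_congr _ (fun _ _ => rfl)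
  ext; simp [Finset.mem_erase, and_comm]

/-- Auxiliary: the key descending-factorial/Poisson weight identity. -/
lemma desc_pow_div_aux (x : ℝ) (mm r : ℕ) :
    (((mm + r).descFactorial r : ℕ) : ℝ) * (x ^ (mm + r) / (Nat.factorial (mm + r) : ℝ))
      = x ^ r * (x ^ mm / (Nat.factorial mm : ℝ)) := by
  have h : ((Nat.factorial mm : ℕ) : ℝ) * (((mm + r).descFactorial r : ℕ) : ℝ)
      = ((Nat.factorial (mm + r) : ℕ) : ℝ) := by
    rw [← Nat.cast_mul]
    norm_cast
    simpa using Nat.factorial_mul_descFactorial (Nat.le_add_left r mm)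
  have hm : ((Nat.factorial mm : ℕ) : ℝ) ≠ 0 := Nat.cast_ne_zero.2 (Nat.factorial_ne_zero mm)
  have hmr : ((Nat.factorial (mm + r) : ℕ) : ℝ) ≠ 0 :=
    Nat.cast_ne_zero.2 (Nat.factorial_ne_zero (mm + r))
  have h2 : (((mm + r).descFactorial r : ℕ) : ℝ)
      = ((Nat.factorial (mm + r) : ℕ) : ℝ) / ((Nat.factorial mm : ℕ) : ℝ) := by
    rw [eq_div_iff hm]; rw [mul_comm]; exact h
  rw [h2, pow_add]
  field_simp

theorem conditional_factorial_moment
    {Ω : Type*} [MeasurableSpace Ω] (μ : Measure Ω) [IsProbabilityMeasure μ]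
    {m n : ℕ} (A : Fin m → Fin n → ℕ) (lam : Fin n → ℝ) (hlam : ∀ j, 0 < lam j)
    (X : Fin n → Ω → ℕ) (hXm : ∀ j, Measurable (X j))
    (hindep : iIndepFun X μ)
    (hX : ∀ j k, μ (X j ⁻¹' {k}) =
      ENNReal.ofReal (Real.exp (-lam j) * lam j ^ k / Nat.factorial k))
    (b : Fin m → ℕ) (r : ℕ) (hr : 0 < r) (j : Fin n)
    (hpos : 0 < μ {ω | ∀ i, ∑ j', A i j' * X j' ω = b i})
    (hF0 : 0 < F0 A lam b) :
    ((∀ i, r * A i j ≤ b i) →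
      ∫ ω, ((X j ω).descFactorial r : ℝ)
          ∂(μ[|{ω | ∀ i, ∑ j', A i j' * X j' ω = b i}]) =
        lam j ^ r * F0 A lam (fun i => b i - r * A i j) / F0 A lam b) ∧
    ((∃ i, b i < r * A i j) →
      ∫ ω, ((X j ω).descFactorial r : ℝ)
          ∂(μ[|{ω | ∀ i, ∑ j', A i j' * X j' ω = b i}]) = 0) := by
  classical
  set E : Set Ω := {ω | ∀ i, ∑ j', A i j' * X j' ω = b i} with hEdef
  set S : Set (Fin n → ℕ) := {k | ∀ i, ∑ j', A i j' * k j' = b i} with hSdef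
  set p : (Fin n → ℕ) → ℝ := fun k => ∏ j', lam j' ^ k j' / (Nat.factorial (k j') : ℝ)
    with hpdef
  set C : ℝ := ∏ j', Real.exp (-lam j') with hCdef
  have hC : 0 < C := Finset.prod_pos fun _ _ => Real.exp_pos _
  have hp : ∀ k, 0 < p k := fun k =>
    Finset.prod_pos fun l _ => div_pos (pow_pos (hlam l) _) (by positivity)
  set V : Ω → Fin n → ℕ := fun ω j' => X j' ω with hVdef
  have hVm : Measurable V := measurable_pi_lambda _ fun j' => hXm j'
  -- singleton measure
  have hsing : ∀ k : Fin n → ℕ, μ (V ⁻¹' {k}) = ENNReal.ofReal (C * p k) := by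
    intro k
    have h1 : V ⁻¹' {k} = ⋂ j', X j' ⁻¹' {k j'} := by
      ext ω
      simp [hVdef, Set.mem_iInter, funext_iff]
    rw [h1, hindep.meas_iInter (fun i => ⟨{k i}, measurableSet_singleton _, rfl⟩)]
    simp_rw [hX]
    rw [← ENNReal.ofReal_prod_of_nonneg (fun i _ => by have := (hlam i).le; positivity)]
    congr 1
    rw [hCdef, hpdef, ← Finset.prod_mul_distrib]
    exact Finset.prod_congr rfl fun l _ => (mul_div_assoc _ _ _)
  have hSmeas : MeasurableSet S := (Set.to_countable S).measurableSet
  have hEiff : ∀ ω, ω ∈ E ↔ V ω ∈ S := fun ω => Iff.rfl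
  have hEeq : E = V ⁻¹' S := Set.ext hEiff
  have hEmeas : MeasurableSet E := hEeq ▸ hVm hSmeas
  -- generic lintegral formula
  have hlint : ∀ f : (Fin n → ℕ) → ENNReal,
      ∫⁻ ω, f (V ω) ∂μ = ∑' k : Fin n → ℕ, f k * ENNReal.ofReal (C * p k) := by
    intro f
    rw [← lintegral_map (measurable_of_countable f) hVm, lintegral_countable']
    exact tsum_congr fun k => by
      rw [Measure.map_apply hVm (measurableSet_singleton _), hsing]
  -- the numerator lintegral
  have hnum : ∫⁻ ω in E, ENNReal.ofReal (((X j ω).descFactorial r : ℕ) : ℝ) ∂μ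
      = ENNReal.ofReal C * ∑' k : Fin n → ℕ,
          ENNReal.ofReal (if k ∈ S then (((k j).descFactorial r : ℕ) : ℝ) * p k else 0) := by
    rw [← lintegral_indicator hEmeas]
    have h2 : ∀ ω, E.indicator (fun ω => ENNReal.ofReal (((X j ω).descFactorial r : ℕ) : ℝ)) ω
        = (fun k => if k ∈ S then ENNReal.ofReal (((k j).descFactorial r : ℕ) : ℝ) else 0)
            (V ω) := by
      intro ω
      by_cases h : ω ∈ E
      · simp only [Set.indicator_apply, if_pos h, if_pos ((hEiff ω).1 h)]; rfl
      · simp only [Set.indicator_apply, if_neg h, if_neg (fun hs => h ((hEiff ω).2 hs))]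
    rw [show (fun ω => E.indicator
          (fun ω => ENNReal.ofReal (((X j ω).descFactorial r : ℕ) : ℝ)) ω)
        = (fun ω => (fun k => if k ∈ S then ENNReal.ofReal (((k j).descFactorial r : ℕ) : ℝ)
            else 0) (V ω)) from funext h2]
    rw [hlint (fun k => if k ∈ S then ENNReal.ofReal (((k j).descFactorial r : ℕ) : ℝ) else 0),
      ← ENNReal.tsum_mul_left]
    refine tsum_congr fun k => ?_
    by_cases h : k ∈ S
    · rw [if_pos h, if_pos h, ENNReal.ofReal_mul hC.le,
        ENNReal.ofReal_mul (by positivity : (0:ℝ) ≤ (((k j).descFactorial r : ℕ) : ℝ))]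
      ring
    · rw [if_neg h, if_neg h]
      simp
  -- the measure of E
  have hSummb : Summable (fun k : Fin n → ℕ => if k ∈ S then p k else 0) := by
    by_contra hns
    rw [F0, show (∑' k : Fin n → ℕ, if ∀ i, ∑ j, A i j * k j = b i
        then ∏ j, lam j ^ k j / (Nat.factorial (k j) : ℝ) else 0)
      = ∑' k : Fin n → ℕ, if k ∈ S then p k else 0 from rfl,
      tsum_eq_zero_of_not_summable hns] at hF0
    exact lt_irrefl _ hF0
  have hF0b : F0 A lam b = ∑' k : Fin n → ℕ, if k ∈ S then p k else 0 := rfl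
  have hμE : μ E = ENNReal.ofReal (C * F0 A lam b) := by
    rw [← lintegral_indicator_one hEmeas]
    have h2 : ∀ ω, E.indicator (1 : Ω → ENNReal) ω
        = (fun k => if k ∈ S then (1 : ENNReal) else 0) (V ω) := by
      intro ω
      by_cases h : ω ∈ E
      · simp only [Set.indicator_apply, if_pos h, if_pos ((hEiff ω).1 h)]; rfl
      · simp only [Set.indicator_apply, if_neg h, if_neg (fun hs => h ((hEiff ω).2 hs))]
    rw [show (fun ω => E.indicator (1 : Ω → ENNReal) ω)
        = (fun ω => (fun k => if k ∈ S then (1 : ENNReal) else 0) (V ω)) from funext h2]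
    rw [hlint (fun k => if k ∈ S then (1 : ENNReal) else 0), hF0b, ENNReal.ofReal_mul hC.le,
      ENNReal.ofReal_tsum_of_nonneg
        (fun k => by have := (hp k).le; split <;> simp [this]) hSummb,
      ← ENNReal.tsum_mul_left]
    refine tsum_congr fun k => ?_
    by_cases h : k ∈ S
    · rw [if_pos h, if_pos h, one_mul, ENNReal.ofReal_mul hC.le]
    · rw [if_neg h, if_neg h]
      simp
  have hF0bpos : 0 < F0 A lam b := hF0
  -- conditional integral reduction
  have hgm : AEStronglyMeasurable (fun ω => (((X j ω).descFactorial r : ℕ) : ℝ))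
      (μ.restrict E) :=
    ((measurable_of_countable (fun q : ℕ => ((q.descFactorial r : ℕ) : ℝ))).comp
      (hXm j)).aestronglyMeasurable
  have hcond : ∫ ω, (((X j ω).descFactorial r : ℕ) : ℝ) ∂(μ[|E])
      = ((μ E)⁻¹).toReal
        * (∫⁻ ω in E, ENNReal.ofReal (((X j ω).descFactorial r : ℕ) : ℝ) ∂μ).toReal := by
    rw [ProbabilityTheory.cond, integral_smul_measure,
      integral_eq_lintegral_of_nonneg_ae (ae_of_all _ fun ω => by positivity) hgm]
    simp [smul_eq_mul]
  constructor
  · -- main case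
    intro hle
    set S' : Set (Fin n → ℕ) := {k | ∀ i, ∑ j', A i j' * k j' = b i - r * A i j} with hS'def
    have hF0' : F0 A lam (fun i => b i - r * A i j)
        = ∑' k : Fin n → ℕ, if k ∈ S' then p k else 0 := rfl
    -- reindexing
    have hbij : (∑' k : Fin n → ℕ,
          ENNReal.ofReal (if k ∈ S then (((k j).descFactorial r : ℕ) : ℝ) * p k else 0))
        = ∑' k : Fin n → ℕ, ENNReal.ofReal (lam j ^ r * if k ∈ S' then p k else 0) := by
      have hkey : ∀ k' : Fin n → ℕ, k' ∈ S' →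
          (Function.update k' j (k' j + r) ∈ S ∧
            ((((Function.update k' j (k' j + r)) j).descFactorial r : ℕ) : ℝ)
              * p (Function.update k' j (k' j + r)) = lam j ^ r * p k') := by
        intro k' hk'
        constructor
        · intro i
          have h1 := sum_update_mul_aux (fun l => A i l) k' j (k' j + r)
          have h2 := hk' i
          have h3 := hle i
          have h4 : r * A i j = A i j * r := Nat.mul_comm r (A i j)
          have h5 : A i j * (k' j + r) = A i j * k' j + A i j * r := Nat.mul_add _ _ _
          omega
        · have hup : Function.update k' j (k' j + r) j = k' j + r := Function.update_self _ _ _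
          rw [hup]
          have hpk : p (Function.update k' j (k' j + r))
              = (lam j ^ (k' j + r) / (Nat.factorial (k' j + r) : ℝ))
                * ∏ l ∈ Finset.univ.erase j, lam l ^ k' l / (Nat.factorial (k' l) : ℝ) :=
            prod_update_div_aux lam k' j (k' j + r)
          have hpk' : p k' = (lam j ^ (k' j) / (Nat.factorial (k' j) : ℝ))
              * ∏ l ∈ Finset.univ.erase j, lam l ^ k' l / (Nat.factorial (k' l) : ℝ) :=
            (Finset.mul_prod_erase _ _ (Finset.mem_univ j)).symm
          rw [hpk, hpk', ← mul_assoc, ← mul_assoc, desc_pow_div_aux (lam j) (k' j) r]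
      refine (tsum_eq_tsum_of_ne_zero_bij
        (fun x => Function.update x.1 j (x.1 j + r)) ?_ ?_ ?_)
      · intro x y hxy
        apply Subtype.ext
        funext l
        have hl := congrFun hxy l
        rcases eq_or_ne l j with rfl | h
        · simp only [Function.update_self] at hl
          omega
        · simpa only [Function.update_of_ne h] using hl
      · intro k hk
        simp only [Function.mem_support, ne_eq] at hk
        have hkS : k ∈ S ∧ (((k j).descFactorial r : ℕ) : ℝ) * p k ≠ 0 := by
          by_contra hcon
          apply hk
          rcases Classical.em (k ∈ S) with h | h
          · rcases Classical.em ((((k j).descFactorial r : ℕ) : ℝ) * p k = 0) with h2 | h2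
            · rw [if_pos h, h2]; simp
            · exact absurd ⟨h, h2⟩ hcon
          · rw [if_neg h]; simp
        obtain ⟨hkS, hne⟩ := hkS
        have hdesc : (k j).descFactorial r ≠ 0 := by
          intro h0
          apply hne
          rw [h0]; simp
        have hrk : r ≤ k j := by
          by_contra h0
          exact hdesc (Nat.descFactorial_eq_zero_iff_lt.2 (by omega))
        set k' := Function.update k j (k j - r) with hk'def
        have hk'S' : k' ∈ S' := by
          intro i
          have h1 := sum_update_mul_aux (fun l => A i l) k j (k j - r)
          have h2 := hkS i
          have h3 : A i j * k j ≤ b i := by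
            rw [← h2]
            exact Finset.single_le_sum (f := fun l => A i l * k l)
              (fun _ _ => Nat.zero_le _) (Finset.mem_univ j)
          have h4 : A i j * (k j - r) = A i j * k j - A i j * r := Nat.mul_sub _ _ _
          have h5 : A i j * r ≤ A i j * k j := Nat.mul_le_mul_left _ hrk
          have h6 : r * A i j = A i j * r := Nat.mul_comm r (A i j)
          show ∑ j', A i j' * Function.update k j (k j - r) j' = b i - r * A i j
          omega
        have hGne : (ENNReal.ofReal (lam j ^ r * if k' ∈ S' then p k' else 0)) ≠ 0 := by
          rw [if_pos hk'S']
          simp only [ne_eq, ENNReal.ofReal_eq_zero, not_le]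
          exact mul_pos (pow_pos (hlam j) r) (hp k')
        refine ⟨⟨k', hGne⟩, ?_⟩
        simp only
        funext l
        rcases eq_or_ne l j with rfl | h
        · simp only [hk'def, Function.update_self]
          omega
        · simp only [hk'def, Function.update_of_ne h]
      · rintro ⟨k', hk'⟩
        simp only [Function.mem_support, ne_eq] at hk'
        have hk'S' : k' ∈ S' := by
          by_contra h
          apply hk'
          rw [if_neg h]
          simp
        obtain ⟨hmem, hval⟩ := hkey k' hk'S'
        simp only
        rw [if_pos hmem, if_pos hk'S', hval]
    -- final assembly
    by_cases hsum' : Summable (fun k : Fin n → ℕ => if k ∈ S' then p k else 0)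
    · have hT : (∑' k : Fin n → ℕ, ENNReal.ofReal (lam j ^ r * if k ∈ S' then p k else 0))
          = ENNReal.ofReal (lam j ^ r) * ENNReal.ofReal (F0 A lam (fun i => b i - r * A i j)) := by
        have : ∀ k : Fin n → ℕ, ENNReal.ofReal (lam j ^ r * if k ∈ S' then p k else 0)
            = ENNReal.ofReal (lam j ^ r) * ENNReal.ofReal (if k ∈ S' then p k else 0) :=
          fun k => ENNReal.ofReal_mul (pow_pos (hlam j) r).le
        simp_rw [this]
        rw [ENNReal.tsum_mul_left, hF0',
          ENNReal.ofReal_tsum_of_nonneg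
            (fun k => by have := (hp k).le; split <;> simp [this]) hsum']
      rw [hcond, hnum, hbij, hT, hμE]
      rw [ENNReal.toReal_inv,
        ENNReal.toReal_ofReal (mul_nonneg hC.le hF0bpos.le),
        ENNReal.toReal_mul, ENNReal.toReal_mul,
        ENNReal.toReal_ofReal hC.le, ENNReal.toReal_ofReal (pow_pos (hlam j) r).le,
        ENNReal.toReal_ofReal]
      · field_simp
      · rw [hF0']
        exact tsum_nonneg fun k => by have := (hp k).le; split <;> simp [this]
    · have hF0'0 : F0 A lam (fun i => b i - r * A i j) = 0 := by
        rw [hF0']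
        exact tsum_eq_zero_of_not_summable hsum'
      have htop : (∑' k : Fin n → ℕ,
          ENNReal.ofReal (lam j ^ r * if k ∈ S' then p k else 0)) = ⊤ := by
        by_contra hne
        apply hsum'
        have h1 := ENNReal.summable_toReal hne
        have h2 : ∀ k : Fin n → ℕ,
            (ENNReal.ofReal (lam j ^ r * if k ∈ S' then p k else 0)).toReal
              = lam j ^ r * if k ∈ S' then p k else 0 :=
          fun k => ENNReal.toReal_ofReal (by
            have h1 := (hp k).le
            have h2 := (pow_pos (hlam j) r).le
            split <;> [exact mul_nonneg h2 h1; simp])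
        simp_rw [h2] at h1
        have h3 := h1.mul_left ((lam j ^ r)⁻¹)
        have h4 : ∀ k : Fin n → ℕ,
            (lam j ^ r)⁻¹ * (lam j ^ r * if k ∈ S' then p k else 0)
              = (if k ∈ S' then p k else 0) := by
          intro k
          rw [← mul_assoc, inv_mul_cancel₀ (pow_pos (hlam j) r).ne', one_mul]
        exact h3.congr h4
      rw [hcond, hnum, hbij, htop, hF0'0]
      rw [ENNReal.mul_top (by
        simp only [ne_eq, ENNReal.ofReal_eq_zero, not_le]
        exact hC)]
      simp
  · -- degenerate case
    intro ⟨i0, hi0⟩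
    have hzero : (∑' k : Fin n → ℕ,
        ENNReal.ofReal (if k ∈ S then (((k j).descFactorial r : ℕ) : ℝ) * p k else 0)) = 0 := by
      rw [ENNReal.summable.tsum_eq_zero_iff]
      intro k
      by_cases h : k ∈ S
      · rw [if_pos h]
        have hdesc : (k j).descFactorial r = 0 := by
          rw [Nat.descFactorial_eq_zero_iff_lt]
          by_contra h0
          have hrk : r ≤ k j := by omega
          have h3 : A i0 j * k j ≤ b i0 := by
            rw [← h i0]
            exact Finset.single_le_sum (f := fun l => A i0 l * k l)
              (fun _ _ => Nat.zero_le _) (Finset.mem_univ j)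
          have h5 : A i0 j * r ≤ A i0 j * k j := Nat.mul_le_mul_left _ hrk
          have h6 : r * A i0 j = A i0 j * r := Nat.mul_comm r (A i0 j)
          omega
        rw [hdesc]
        simp
      · rw [if_neg h]
        simp
    rw [hcond, hnum, hzero]
    simp
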